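/- arXiv:2605.00501 — 3 statements merged into one kernel-verified Lean document; each statement's English description precedes it below -/
import Mathlib

section
/- Let n ≥ 2, let s : Fin n → ℝ be injective (no ties in scores), and let ỹ : Fin n → ℝ be a bijection onto {1, 2, …, n}. Define the predicted rank r̂_i = 1 + #{j ≠ i : s_i < s_j} and ρ = 12·(Σ_{i=1}^{n} r̂_i ỹ_i − n·((n+1)/2)²) / (n(n² − 1)). Then 1 − ρ = (12 / (n(n² − 1))) · Σ_{(i,j) : ỹ_i < ỹ_j} (ỹ_j − ỹ_i)·[s_i < s_j], where the sum is over all ordered pairs (i, j) with ỹ_i < ỹ_j and [P] is the indicator equal to 1 if P holds and 0 otherwise. -/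
open Finset

private lemma sum_cast_range (n : ℕ) :
    ∑ k ∈ Finset.range n, (k : ℝ) = n * (n - 1) / 2 := by
  induction n with
  | zero => simp
  | succ m ih => rw [Finset.sum_range_succ, ih]; push_cast; ring

private lemma sum_sq_range (n : ℕ) :
    ∑ k ∈ Finset.range n, (k : ℝ) ^ 2 = n * (n - 1) * (2 * n - 1) / 6 := by
  induction n with
  | zero => simp
  | succ m ih => rw [Finset.sum_range_succ, ih]; push_cast; ring

private lemma count_gt_aux (n a : ℕ) (ha : a < n) :
    ∑ b ∈ Finset.range n, (if a < b then (1 : ℝ) else 0) = (n : ℝ) - 1 - a := by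
  rw [Finset.sum_boole]
  have h : (Finset.range n).filter (fun b => a < b) = Finset.Ico (a + 1) n := by
    ext b; simp only [Finset.mem_filter, Finset.mem_range, Finset.mem_Ico]; omega
  rw [h, Nat.card_Ico]
  have h1 : a + 1 ≤ n := ha
  push_cast [Nat.cast_sub h1]
  ring

private lemma count_lt_aux (n a : ℕ) (ha : a < n) :
    ∑ b ∈ Finset.range n, (if b < a then (1 : ℝ) else 0) = (a : ℝ) := by
  rw [Finset.sum_boole]
  have h : (Finset.range n).filter (fun b => b < a) = Finset.range a := by
    ext b; simp only [Finset.mem_filter, Finset.mem_range]; omega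
  rw [h, Finset.card_range]

private lemma dc {n : ℕ} (g : Fin n → ℝ) (w : Fin n → Fin n → ℝ) :
    ∑ i : Fin n, ∑ j : Fin n, (g j - g i) * w i j
      = ∑ j : Fin n, g j * (∑ i : Fin n, w i j)
        - ∑ i : Fin n, g i * (∑ j : Fin n, w i j) := by
  have h : ∀ i j : Fin n, (g j - g i) * w i j = g j * w i j - g i * w i j :=
    fun i j => by ring
  simp only [h, Finset.sum_sub_distrib, Finset.mul_sum]
  rw [Finset.sum_comm]

/-- Proposition 2 (the RankIC loss identity):
`1 − ρ = (12/(n(n²−1))) Σ_{ỹ_i < ỹ_j} (ỹ_j − ỹ_i)·[s_i < s_j]`. -/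
theorem one_sub_rankIC_eq (n : ℕ) (hn : 2 ≤ n) (s : Fin n → ℝ)
    (hs : Function.Injective s) (y : Fin n → ℝ)
    (hy : ∃ σ : Equiv.Perm (Fin n), ∀ i, y i = ((σ i : ℕ) : ℝ) + 1) :
    1 - 12 * ((∑ i, (1 + ((univ.filter fun j => j ≠ i ∧ s i < s j).card : ℝ)) * y i)
            - n * (((n : ℝ) + 1) / 2) ^ 2) / (n * ((n : ℝ) ^ 2 - 1))
      = 12 / (n * ((n : ℝ) ^ 2 - 1)) *
          ∑ p ∈ univ.filter fun p : Fin n × Fin n => y p.1 < y p.2,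
            (y p.2 - y p.1) * (if s p.1 < s p.2 then (1 : ℝ) else 0) := by
  obtain ⟨σ, hσ⟩ := hy
  -- indicator of score comparison
  set e : Fin n → Fin n → ℝ := fun i j => if s i < s j then 1 else 0 with he
  -- indicator of label comparison
  set f : Fin n → Fin n → ℝ := fun i j => if y i < y j then 1 else 0 with hf
  have hyiff : ∀ i j, y i < y j ↔ (σ i : ℕ) < (σ j : ℕ) := by
    intro i j
    rw [hσ i, hσ j]
    simp only [add_lt_add_iff_right, Nat.cast_lt]
  have hyinj : Function.Injective y := by
    intro i j hij
    rw [hσ i, hσ j] at hij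
    have h2 := add_right_cancel hij
    have : (σ i : ℕ) = (σ j : ℕ) := by exact_mod_cast h2
    exact σ.injective (Fin.ext this)
  -- s i ≠ s j for i ≠ j
  have hsne : ∀ i j : Fin n, i ≠ j → s i ≠ s j := fun i j h h' => h (hs h')
  -- card = row sum of e
  have hcard : ∀ i, ((univ.filter fun j => j ≠ i ∧ s i < s j).card : ℝ) = ∑ j, e i j := by
    intro i
    rw [← Finset.sum_boole]
    refine Finset.sum_congr rfl fun j _ => ?_
    by_cases h : j = i
    · subst h; simp [he]
    · simp [he, h]
  -- column sums of e
  have hcol : ∀ j, (∑ i, e i j) = (n : ℝ) - 1 - ∑ i, e j i := by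
    intro j
    have step : ∀ i, e i j = (if i ≠ j then (1 : ℝ) else 0) - e j i := by
      intro i
      by_cases h : i = j
      · subst h; simp [he]
      · rcases (hsne i j h).lt_or_gt with h1 | h1
        · simp [he, h, h1, not_lt_of_gt h1]
        · simp [he, h, h1, not_lt_of_gt h1]
    rw [Finset.sum_congr rfl fun i _ => step i, Finset.sum_sub_distrib]
    have h1 : (∑ i : Fin n, if i ≠ j then (1 : ℝ) else 0) = (n : ℝ) - 1 := by
      have step2 : ∀ i : Fin n, (if i ≠ j then (1 : ℝ) else 0)
          = 1 - (if i = j then (1 : ℝ) else 0) := by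
        intro i; by_cases h : i = j <;> simp [h]
      rw [Finset.sum_congr rfl fun i _ => step2 i, Finset.sum_sub_distrib,
        Finset.sum_const, Finset.sum_ite_eq' univ j (fun _ => (1 : ℝ))]
      simp
    rw [h1]
  -- row sums of f
  have hrowf : ∀ i, (∑ j, f i j) = (n : ℝ) - 1 - (σ i : ℕ) := by
    intro i
    have : ∀ j, f i j = (fun b : Fin n => if (σ i : ℕ) < (b : ℕ) then (1 : ℝ) else 0) (σ j) := by
      intro j; simp only [hf, hyiff]
    rw [Finset.sum_congr rfl fun j _ => this j, Equiv.sum_comp σ (fun b : Fin n => if (σ i : ℕ) < (b : ℕ) then (1 : ℝ) else 0),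
      Fin.sum_univ_eq_sum_range (fun k => if (σ i : ℕ) < k then (1 : ℝ) else 0),
      count_gt_aux n (σ i) (σ i).isLt]
  -- column sums of f
  have hcolf : ∀ j, (∑ i, f i j) = ((σ j : ℕ) : ℝ) := by
    intro j
    have : ∀ i, f i j = (fun b : Fin n => if (b : ℕ) < (σ j : ℕ) then (1 : ℝ) else 0) (σ i) := by
      intro i; simp only [hf, hyiff]
    rw [Finset.sum_congr rfl fun i _ => this i, Equiv.sum_comp σ (fun b : Fin n => if (b : ℕ) < (σ j : ℕ) then (1 : ℝ) else 0),
      Fin.sum_univ_eq_sum_range (fun k => if k < (σ j : ℕ) then (1 : ℝ) else 0),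
      count_lt_aux n (σ j) (σ j).isLt]
  -- abbreviations
  set Y : ℝ := ∑ i, y i with hY
  set P : ℝ := ∑ i, y i * (∑ j, e i j) with hP
  set Q : ℝ := ∑ i, y i * ((σ i : ℕ) : ℝ) with hQ
  -- F = (n-1) Y - 2 P
  have hF : (∑ i : Fin n, ∑ j : Fin n, (y j - y i) * e i j) = ((n : ℝ) - 1) * Y - 2 * P := by
    rw [dc]
    have step : ∀ j, y j * (∑ i, e i j) = y j * ((n : ℝ) - 1) - y j * (∑ i, e j i) := by
      intro j; rw [hcol j]; ring
    rw [Finset.sum_congr rfl fun j _ => step j, Finset.sum_sub_distrib, ← Finset.sum_mul]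
    rw [hY, hP]
    ring
  -- T = 2 Q - (n-1) Y
  have hT : (∑ i : Fin n, ∑ j : Fin n, (y j - y i) * f i j) = 2 * Q - ((n : ℝ) - 1) * Y := by
    rw [dc]
    have step : ∀ j, y j * (∑ i, f i j) = y j * ((σ j : ℕ) : ℝ) := fun j => by rw [hcolf j]
    have step2 : ∀ i, y i * (∑ j, f i j)
        = y i * ((n : ℝ) - 1) - y i * ((σ i : ℕ) : ℝ) := by
      intro i; rw [hrowf i]; ring
    rw [Finset.sum_congr rfl fun j _ => step j,
      Finset.sum_congr rfl fun i _ => step2 i, Finset.sum_sub_distrib, ← Finset.sum_mul]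
    rw [hY, hQ]
    ring
  -- the target double sum
  set S : ℝ := ∑ i : Fin n, ∑ j : Fin n,
      (if y i < y j then (y j - y i) * e i j else 0) with hS
  set T : ℝ := ∑ i : Fin n, ∑ j : Fin n,
      (if y i < y j then (y j - y i) else 0) with hTd
  have hTT : T = ∑ i : Fin n, ∑ j : Fin n, (y j - y i) * f i j := by
    rw [hTd]
    refine Finset.sum_congr rfl fun i _ => Finset.sum_congr rfl fun j _ => ?_
    by_cases h : y i < y j <;> simp [hf, h]
  -- split F by sign
  have hsplit : (∑ i : Fin n, ∑ j : Fin n, (y j - y i) * e i j) = 2 * S - T := by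
    have step : ∀ i j : Fin n, (y j - y i) * e i j
        = (if y i < y j then (y j - y i) * e i j else 0)
          + (if y j < y i then (y j - y i) * e i j else 0) := by
      intro i j
      rcases lt_trichotomy (y i) (y j) with h | h | h
      · simp [h, not_lt_of_gt h]
      · simp [h]
      · simp [h, not_lt_of_gt h]
    rw [Finset.sum_congr rfl fun i _ =>
      Finset.sum_congr rfl fun j _ => step i j]
    simp only [Finset.sum_add_distrib]
    have hB : (∑ i : Fin n, ∑ j : Fin n, (if y j < y i then (y j - y i) * e i j else 0))
        = S - T := by
      rw [Finset.sum_comm]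
      have step2 : ∀ j i : Fin n, (if y j < y i then (y j - y i) * e i j else 0)
          = (if y j < y i then (y i - y j) * e j i else 0)
            - (if y j < y i then (y i - y j) else 0) := by
        intro j i
        by_cases h : y j < y i
        · have hne : j ≠ i := fun hji => absurd (congrArg y hji) (ne_of_lt h)
          have hee : e i j = 1 - e j i := by
            rcases (hsne j i hne).lt_or_gt with h1 | h1
            · simp [he, h1, not_lt_of_gt h1]
            · simp [he, h1, not_lt_of_gt h1]
          rw [if_pos h, if_pos h, if_pos h, hee]
          ring
        · simp [h]
      rw [Finset.sum_congr rfl fun j _ =>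
        Finset.sum_congr rfl fun i _ => step2 j i]
      simp only [Finset.sum_sub_distrib]
      rw [hS, hTd]
    rw [hB, hS]
    ring
  -- S = Q - P
  have hSQP : S = Q - P := by
    have hT' : T = 2 * Q - ((n : ℝ) - 1) * Y := by rw [hTT]; exact hT
    have h1 := hsplit
    rw [hF, hT'] at h1
    linarith
  -- values of Y and Q
  have hYv : Y = (n : ℝ) * ((n : ℝ) + 1) / 2 := by
    rw [hY]
    have : ∀ i, y i = (fun b : Fin n => ((b : ℕ) : ℝ) + 1) (σ i) := fun i => hσ i
    rw [Finset.sum_congr rfl fun i _ => this i, Equiv.sum_comp σ (fun b : Fin n => ((b : ℕ) : ℝ) + 1),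
      Fin.sum_univ_eq_sum_range (fun k => (k : ℝ) + 1), Finset.sum_add_distrib,
      sum_cast_range, Finset.sum_const, Finset.card_range]
    have h2 : (1 : ℝ) ≤ (n : ℝ) := by
      have : (2 : ℝ) ≤ (n : ℝ) := by exact_mod_cast hn
      linarith
    simp only [nsmul_eq_mul, mul_one]
    ring
  have hQv : Q = (n : ℝ) * ((n : ℝ) - 1) * (2 * (n : ℝ) - 1) / 6
      + (n : ℝ) * ((n : ℝ) - 1) / 2 := by
    rw [hQ]
    have : ∀ i, y i * ((σ i : ℕ) : ℝ)
        = (fun b : Fin n => (((b : ℕ) : ℝ) + 1) * ((b : ℕ) : ℝ)) (σ i) := by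
      intro i; rw [hσ i]
    rw [Finset.sum_congr rfl fun i _ => this i, Equiv.sum_comp σ (fun b : Fin n => (((b : ℕ) : ℝ) + 1) * ((b : ℕ) : ℝ)),
      Fin.sum_univ_eq_sum_range (fun k => ((k : ℝ) + 1) * (k : ℝ))]
    have : ∀ k : ℕ, ((k : ℝ) + 1) * (k : ℝ) = (k : ℝ) ^ 2 + (k : ℝ) := fun k => by ring
    rw [Finset.sum_congr rfl fun k _ => this k, Finset.sum_add_distrib,
      sum_sq_range, sum_cast_range]
  -- rewrite LHS sum
  have hLHS : (∑ i, (1 + ((univ.filter fun j => j ≠ i ∧ s i < s j).card : ℝ)) * y i)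
      = Y + P := by
    have step : ∀ i, (1 + ((univ.filter fun j => j ≠ i ∧ s i < s j).card : ℝ)) * y i
        = y i + y i * (∑ j, e i j) := by
      intro i; rw [hcard i]; ring
    rw [Finset.sum_congr rfl fun i _ => step i, Finset.sum_add_distrib, hY, hP]
  -- rewrite RHS sum
  have hRHS : (∑ p ∈ univ.filter fun p : Fin n × Fin n => y p.1 < y p.2,
      (y p.2 - y p.1) * (if s p.1 < s p.2 then (1 : ℝ) else 0)) = S := by
    rw [Finset.sum_filter, hS, Fintype.sum_prod_type]
  rw [hLHS, hRHS, hSQP, hYv, hQv]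
  have hn2 : (2 : ℝ) ≤ (n : ℝ) := by exact_mod_cast hn
  have hN : (n : ℝ) * ((n : ℝ) ^ 2 - 1) ≠ 0 := by
    have h1 : (0 : ℝ) < (n : ℝ) := by linarith
    have h2 : (0 : ℝ) < (n : ℝ) ^ 2 - 1 := by nlinarith
    positivity
  have hN1 : (n : ℝ) ≠ 0 := by intro h; rw [h] at hn2; norm_num at hn2
  have hN2 : (n : ℝ) ^ 2 - 1 ≠ 0 := by intro h; nlinarith
  field_simp
  ring
end

section
/- Let n ≥ 2, let s : Fin n → ℝ be injective, let ỹ : Fin n → ℝ be a bijection onto {1, 2, …, n}, and define r̂_i = 1 + #{j ≠ i : s_i < s_j}. Then Σ_{i=1}^{n} r̂_i ỹ_i = n(n+1)(2n+1)/6 − Σ_{(i,j) : ỹ_i < ỹ_j} (ỹ_j − ỹ_i)·[s_i < s_j], where the sum is over all ordered pairs (i, j) with ỹ_i < ỹ_j and [P] is the indicator equal to 1 if P holds and 0 otherwise. -/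
open Finset

private lemma sumsq_aux (n : ℕ) :
    ∑ k ∈ range n, ((k : ℝ) + 1) ^ 2
      = (n : ℝ) * ((n : ℝ) + 1) * (2 * (n : ℝ) + 1) / 6 := by
  induction n with
  | zero => simp
  | succ m ih =>
      rw [Finset.sum_range_succ, ih]
      push_cast
      ring

/-- Key intermediate formula in the proof of Proposition 2: the rank inner product
equals `n(n+1)(2n+1)/6` minus the discordant-pair sum. -/
theorem rank_inner_product_formula (n : ℕ) (hn : 2 ≤ n) (s : Fin n → ℝ)
    (hs : Function.Injective s) (y : Fin n → ℝ)
    (hy : ∃ σ : Equiv.Perm (Fin n), ∀ i, y i = ((σ i : ℕ) : ℝ) + 1) :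
    (∑ i, (1 + ((univ.filter fun j => j ≠ i ∧ s i < s j).card : ℝ)) * y i)
      = (n : ℝ) * ((n : ℝ) + 1) * (2 * (n : ℝ) + 1) / 6
          - ∑ p ∈ univ.filter fun p : Fin n × Fin n => y p.1 < y p.2,
              (y p.2 - y p.1) * (if s p.1 < s p.2 then (1 : ℝ) else 0) := by
  obtain ⟨σ, hσ⟩ := hy
  have hyinj : Function.Injective y := by
    intro a b h
    rw [hσ a, hσ b] at h
    have : ((σ a : ℕ) : ℝ) = ((σ b : ℕ) : ℝ) := by linarith
    exact σ.injective (Fin.val_injective (by exact_mod_cast this))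
  set F : Fin n × Fin n → ℝ :=
    fun p => if p.2 ≠ p.1 ∧ s p.1 < s p.2 then y p.1 else 0 with hF
  set H : Fin n × Fin n → ℝ :=
    fun p => if y p.1 < y p.2 then y p.2 else 0 with hH
  set G : Fin n × Fin n → ℝ :=
    fun p => if y p.1 < y p.2 then (y p.2 - y p.1) * (if s p.1 < s p.2 then (1 : ℝ) else 0)
      else 0 with hG
  -- rewrite LHS
  have hLHS : (∑ i, (1 + ((univ.filter fun j => j ≠ i ∧ s i < s j).card : ℝ)) * y i)
      = (∑ i, y i) + ∑ p : Fin n × Fin n, F p := by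
    rw [Fintype.sum_prod_type]
    rw [← Finset.sum_add_distrib]
    refine Finset.sum_congr rfl fun i _ => ?_
    have : ∑ j, F (i, j) = ((univ.filter fun j => j ≠ i ∧ s i < s j).card : ℝ) * y i := by
      rw [hF]
      simp only
      rw [← Finset.sum_filter, Finset.sum_const, nsmul_eq_mul]
    rw [this]
    ring
  -- rewrite RHS sum
  have hRHS : (∑ p ∈ univ.filter fun p : Fin n × Fin n => y p.1 < y p.2,
      (y p.2 - y p.1) * (if s p.1 < s p.2 then (1 : ℝ) else 0)) = ∑ p : Fin n × Fin n, G p := by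
    rw [hG, Finset.sum_filter]
  -- key pointwise identity
  have key : ∀ p : Fin n × Fin n,
      F p + F p.swap = H p + H p.swap - (G p + G p.swap) := by
    rintro ⟨i, j⟩
    simp only [hF, hH, hG, Prod.swap_prod_mk]
    rcases eq_or_ne i j with rfl | hne
    · simp
    · have hy12 : y i ≠ y j := fun h => hne (hyinj h)
      have hs12 : s i ≠ s j := fun h => hne (hs h)
      rcases hy12.lt_or_gt with hy' | hy' <;> rcases hs12.lt_or_gt with hs' | hs' <;>
        simp [hne, hne.symm, hy', hs', not_lt_of_gt hy', not_lt_of_gt hs',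
          le_of_lt hy', le_of_lt hs'] <;> ring
  -- swap invariance of sums
  have swapsum : ∀ K : Fin n × Fin n → ℝ,
      (∑ p : Fin n × Fin n, K p.swap) = ∑ p : Fin n × Fin n, K p := by
    intro K
    exact Equiv.sum_comp (Equiv.prodComm (Fin n) (Fin n)) K
  have hFG : (∑ p : Fin n × Fin n, F p)
      = (∑ p : Fin n × Fin n, H p) - ∑ p : Fin n × Fin n, G p := by
    have h2 : (2 : ℝ) * (∑ p : Fin n × Fin n, F p)
        = 2 * (∑ p : Fin n × Fin n, H p) - 2 * ∑ p : Fin n × Fin n, G p := by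
      have := Finset.sum_congr rfl (fun p (_ : p ∈ (univ : Finset (Fin n × Fin n))) => key p)
      rw [Finset.sum_add_distrib, Finset.sum_sub_distrib, Finset.sum_add_distrib,
        Finset.sum_add_distrib, swapsum F, swapsum H, swapsum G] at this
      linarith
    linarith
  -- count: number of i with y i < y j is σ j
  have hcard : ∀ j, ((univ.filter fun i => y i < y j).card : ℕ) = (σ j : ℕ) := by
    intro j
    have h1 : (univ.filter fun i => y i < y j) = (univ.filter fun i => σ i < σ j) := by
      refine Finset.filter_congr fun i _ => ?_
      rw [hσ i, hσ j]
      constructor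
      · intro h
        have : ((σ i : ℕ) : ℝ) < ((σ j : ℕ) : ℝ) := by linarith
        exact_mod_cast this
      · intro h
        have : ((σ i : ℕ) : ℝ) < ((σ j : ℕ) : ℝ) := by exact_mod_cast h
        linarith
    rw [h1]
    have h2 : (univ.filter fun i => σ i < σ j).card = (univ.filter fun k => k < σ j).card := by
      refine Finset.card_bij (fun i _ => σ i) ?_ ?_ ?_
      · intro a ha
        simp only [Finset.mem_filter, Finset.mem_univ, true_and] at ha ⊢
        exact ha
      · intro a _ b _ h
        exact σ.injective h
      · intro b hb
        refine ⟨σ.symm b, ?_, by simp⟩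
        simp only [Finset.mem_filter, Finset.mem_univ, true_and] at hb ⊢
        simpa using hb
    rw [h2]
    have : (univ.filter fun k : Fin n => k < σ j) = Finset.Iio (σ j) := by
      ext k; simp [Finset.mem_Iio]
    rw [this, Fin.card_Iio]
  -- sum of H
  have hHsum : (∑ i, y i) + (∑ p : Fin n × Fin n, H p)
      = (n : ℝ) * ((n : ℝ) + 1) * (2 * (n : ℝ) + 1) / 6 := by
    have h1 : (∑ p : Fin n × Fin n, H p) = ∑ j, ((σ j : ℕ) : ℝ) * y j := by
      rw [Fintype.sum_prod_type]
      rw [Finset.sum_comm]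
      refine Finset.sum_congr rfl fun j _ => ?_
      rw [hH]
      simp only
      rw [← Finset.sum_filter, Finset.sum_const, nsmul_eq_mul, hcard j]
    rw [h1, ← Finset.sum_add_distrib]
    calc ∑ j, (y j + ((σ j : ℕ) : ℝ) * y j)
        = ∑ j, (((σ j : ℕ) : ℝ) + 1) ^ 2 :=
          Finset.sum_congr rfl fun j _ => by rw [hσ j]; ring
      _ = ∑ k : Fin n, (((k : ℕ) : ℝ) + 1) ^ 2 := Equiv.sum_comp σ (fun k => (((k : ℕ) : ℝ) + 1) ^ 2)
      _ = ∑ k ∈ range n, ((k : ℝ) + 1) ^ 2 := Fin.sum_univ_eq_sum_range (fun k => ((k : ℝ) + 1) ^ 2) n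
      _ = _ := sumsq_aux n
  rw [hLHS, hRHS, hFG]
  linarith [hHsum]
end

section
/- Let n ≥ 2, let s : Fin n → ℝ be injective, let ỹ : Fin n → ℝ be a bijection onto {1, 2, …, n}, let σ > 0, and define ρ = 12·(Σ_{i=1}^{n} r̂_i ỹ_i − n·((n+1)/2)²)/(n(n² − 1)) with r̂_i = 1 + #{j ≠ i : s_i < s_j}. Then 1 − ρ ≤ (12 / (n(n² − 1))) · Σ_{(i,j) : ỹ_i < ỹ_j} (ỹ_j − ỹ_i) · log₂(1 + exp(−σ(s_i − s_j))), where the sum is over all ordered pairs (i, j) with ỹ_i < ỹ_j. -/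
open Finset

private lemma sum_sq_formula (n : ℕ) :
    ∑ k ∈ range n, ((k : ℝ) + 1) ^ 2 = (n:ℝ) * ((n:ℝ) + 1) * (2 * (n:ℝ) + 1) / 6 := by
  induction n with
  | zero => simp
  | succ m ih => rw [Finset.sum_range_succ, ih]; push_cast; ring

private lemma card_lt_perm {n : ℕ} (σ : Equiv.Perm (Fin n)) (i : Fin n) :
    (univ.filter fun j => σ j < σ i).card = (σ i : ℕ) := by
  have h : (univ.filter fun j => σ j < σ i).card
      = (univ.filter fun k : Fin n => k < σ i).card := by
    apply Finset.card_bij (fun j _ => σ j)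
    · intro a ha; simp at ha ⊢; exact ha
    · intro a ha b hb hab; exact σ.injective hab
    · intro b hb; simp at hb ⊢; exact ⟨σ.symm b, by simpa using hb⟩
  rw [h, show (univ.filter fun k : Fin n => k < σ i) = Iio (σ i) from by ext k; simp,
    Fin.card_Iio]

private lemma sum_pair {n : ℕ} (P : Fin n × Fin n → Prop) [DecidablePred P]
    (f : Fin n × Fin n → ℝ) :
    ∑ p ∈ univ.filter P, f p
      = ∑ i, ∑ j ∈ univ.filter (fun j => P (i, j)), f (i, j) := by
  rw [Finset.sum_filter, Fintype.sum_prod_type]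
  simp_rw [Finset.sum_filter]

/-- swap the coordinates in a filtered pair sum -/
private lemma sum_swap_pair {n : ℕ} (P Q : Fin n × Fin n → Prop) [DecidablePred P]
    [DecidablePred Q] (f g : Fin n × Fin n → ℝ)
    (hPQ : ∀ p, P p → Q p.swap) (hQP : ∀ p, Q p → P p.swap)
    (hfg : ∀ p, P p → f p = g p.swap) :
    ∑ p ∈ univ.filter P, f p = ∑ p ∈ univ.filter Q, g p := by
  refine Finset.sum_nbij' (i := Prod.swap) (j := Prod.swap) ?_ ?_ ?_ ?_ ?_
  · intro a ha; simp only [mem_filter, mem_univ, true_and] at ha ⊢; exact hPQ a ha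
  · intro a ha; simp only [mem_filter, mem_univ, true_and] at ha ⊢; exact hQP a ha
  · intro a _; simp
  · intro a _; simp
  · intro a ha; simp only [mem_filter, mem_univ, true_and] at ha; exact hfg a ha

/-- Eq. 25: `1 − ρ ≤ l_sg`, the logistic surrogate bound on the RankIC loss. -/
theorem one_sub_rankIC_le_logistic_surrogate (n : ℕ) (hn : 2 ≤ n)
    (s : Fin n → ℝ) (hs : Function.Injective s) (y : Fin n → ℝ)
    (hy : ∃ σ : Equiv.Perm (Fin n), ∀ i, y i = ((σ i : ℕ) : ℝ) + 1)
    (σ : ℝ) (hσ : 0 < σ) :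
    1 - 12 * ((∑ i, (1 + ((univ.filter fun j => j ≠ i ∧ s i < s j).card : ℝ)) * y i)
            - n * (((n : ℝ) + 1) / 2) ^ 2) / (n * ((n : ℝ) ^ 2 - 1))
      ≤ 12 / (n * ((n : ℝ) ^ 2 - 1)) *
          ∑ p ∈ univ.filter fun p : Fin n × Fin n => y p.1 < y p.2,
            (y p.2 - y p.1) * Real.logb 2 (1 + Real.exp (-σ * (s p.1 - s p.2))) := by
  obtain ⟨π, hπ⟩ := hy
  have hn' : (2:ℝ) ≤ (n:ℝ) := by exact_mod_cast hn
  have hK : (0:ℝ) < n * ((n : ℝ) ^ 2 - 1) := by nlinarith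
  set K : ℝ := n * ((n : ℝ) ^ 2 - 1) with hKdef
  -- y is injective
  have hyinj : Function.Injective y := by
    intro a b hab
    rw [hπ a, hπ b] at hab
    have h2 : ((π a : ℕ):ℝ) = ((π b : ℕ):ℝ) := by linarith
    exact π.injective (Fin.val_injective (by exact_mod_cast h2))
  -- the rank filter simplifies
  have hB : ∀ i, (univ.filter fun j => j ≠ i ∧ s i < s j)
      = univ.filter fun j => s i < s j := by
    intro i; ext j
    simp only [mem_filter, mem_univ, true_and, and_iff_right_iff_imp]
    intro h he; subst he; exact lt_irrefl _ h
  -- y i = 1 + card of smaller values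
  have hA : ∀ i, y i = 1 + ((univ.filter fun j => y j < y i).card : ℝ) := by
    intro i
    have he : (univ.filter fun j => y j < y i) = univ.filter fun j => π j < π i := by
      ext j
      simp only [mem_filter, mem_univ, true_and, hπ]
      constructor
      · intro h
        have : ((π j : ℕ):ℝ) < ((π i : ℕ):ℝ) := by linarith
        exact Fin.lt_def.mpr (by exact_mod_cast this)
      · intro h
        have : ((π j : ℕ):ℝ) < ((π i : ℕ):ℝ) := by exact_mod_cast Fin.lt_def.mp h
        linarith
    rw [he, card_lt_perm π i, hπ i]; ring
  -- key pair sets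
  set D : ℝ := ∑ p ∈ univ.filter (fun p : Fin n × Fin n => y p.1 < y p.2 ∧ s p.1 < s p.2),
      (y p.2 - y p.1) with hDdef
  -- Step A : ∑ i, (1 + card B i) * y i = ∑ i, y i ^ 2 - D
  have hsq : ∑ i, y i ^ 2
      = ∑ i, (1 + ((univ.filter fun j => y j < y i).card : ℝ)) * y i := by
    apply Finset.sum_congr rfl
    intro i _
    rw [← hA i, sq]
  have hAsum : ∑ i, ((univ.filter fun j => y j < y i).card : ℝ) * y i
      = ∑ p ∈ univ.filter (fun p : Fin n × Fin n => y p.2 < y p.1), y p.1 := by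
    rw [sum_pair (fun p : Fin n × Fin n => y p.2 < y p.1) (fun p => y p.1)]
    apply Finset.sum_congr rfl
    intro i _
    simp [Finset.sum_const, nsmul_eq_mul, mul_comm]
  have hAswap : ∑ p ∈ univ.filter (fun p : Fin n × Fin n => y p.2 < y p.1), y p.1
      = ∑ p ∈ univ.filter (fun p : Fin n × Fin n => y p.1 < y p.2), y p.2 := by
    apply sum_swap_pair
    · intro p hp; exact hp
    · intro p hp; exact hp
    · intro p _; rfl
  have hBsum : ∑ i, ((univ.filter fun j => s i < s j).card : ℝ) * y i
      = ∑ p ∈ univ.filter (fun p : Fin n × Fin n => s p.1 < s p.2), y p.1 := by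
    rw [sum_pair (fun p : Fin n × Fin n => s p.1 < s p.2) (fun p => y p.1)]
    apply Finset.sum_congr rfl
    intro i _
    simp [Finset.sum_const, nsmul_eq_mul, mul_comm]
  -- splitting the two pair sums
  have split1 : ∑ p ∈ univ.filter (fun p : Fin n × Fin n => y p.1 < y p.2), y p.2
      = ∑ p ∈ univ.filter (fun p : Fin n × Fin n => y p.1 < y p.2 ∧ s p.1 < s p.2), y p.2
        + ∑ p ∈ univ.filter (fun p : Fin n × Fin n => y p.1 < y p.2 ∧ ¬ s p.1 < s p.2), y p.2 := by
    rw [← Finset.sum_filter_add_sum_filter_not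
      (univ.filter (fun p : Fin n × Fin n => y p.1 < y p.2)) (fun p => s p.1 < s p.2),
      Finset.filter_filter, Finset.filter_filter]
  have split2 : ∑ p ∈ univ.filter (fun p : Fin n × Fin n => s p.1 < s p.2), y p.1
      = ∑ p ∈ univ.filter (fun p : Fin n × Fin n => s p.1 < s p.2 ∧ y p.1 < y p.2), y p.1
        + ∑ p ∈ univ.filter (fun p : Fin n × Fin n => s p.1 < s p.2 ∧ ¬ y p.1 < y p.2), y p.1 := by
    rw [← Finset.sum_filter_add_sum_filter_not
      (univ.filter (fun p : Fin n × Fin n => s p.1 < s p.2)) (fun p => y p.1 < y p.2),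
      Finset.filter_filter, Finset.filter_filter]
  have swap2 : ∑ p ∈ univ.filter (fun p : Fin n × Fin n => s p.1 < s p.2 ∧ ¬ y p.1 < y p.2), y p.1
      = ∑ p ∈ univ.filter (fun p : Fin n × Fin n => y p.1 < y p.2 ∧ ¬ s p.1 < s p.2), y p.2 := by
    apply sum_swap_pair
    · rintro p ⟨h1, h2⟩
      have hne : p.1 ≠ p.2 := fun he => absurd (he ▸ h1) (lt_irrefl _)
      constructor
      · rcases lt_trichotomy (y p.1) (y p.2) with h | h | h
        · exact absurd h h2
        · exact absurd (hyinj h) hne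
        · exact h
      · exact not_lt.mpr (le_of_lt h1)
    · rintro p ⟨h1, h2⟩
      have hne : p.1 ≠ p.2 := fun he => absurd (he ▸ h1) (lt_irrefl _)
      constructor
      · rcases lt_trichotomy (s p.1) (s p.2) with h | h | h
        · exact absurd h h2
        · exact absurd (hs h) hne
        · exact h
      · exact not_lt.mpr (le_of_lt h1)
    · intro p _; rfl
  have comm12 : univ.filter (fun p : Fin n × Fin n => s p.1 < s p.2 ∧ y p.1 < y p.2)
      = univ.filter (fun p : Fin n × Fin n => y p.1 < y p.2 ∧ s p.1 < s p.2) := by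
    apply Finset.filter_congr; intro p _; exact and_comm
  have stepA : ∑ i, (1 + ((univ.filter fun j => j ≠ i ∧ s i < s j).card : ℝ)) * y i
      = (∑ i, y i ^ 2) - D := by
    simp_rw [hB]
    rw [hsq]
    simp_rw [add_mul, one_mul]
    rw [Finset.sum_add_distrib, Finset.sum_add_distrib, hAsum, hAswap, hBsum, hDdef,
      Finset.sum_sub_distrib, split1, split2, swap2, comm12]
    ring
  -- value of ∑ y i ^ 2
  have hQ : ∑ i, y i ^ 2 = (n:ℝ) * ((n:ℝ) + 1) * (2 * (n:ℝ) + 1) / 6 := by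
    have h1 : ∑ i, y i ^ 2 = ∑ i, (((π i : ℕ):ℝ) + 1) ^ 2 := by
      apply Finset.sum_congr rfl; intro i _; rw [hπ i]
    rw [h1, Equiv.sum_comp π (fun k : Fin n => (((k : ℕ):ℝ) + 1) ^ 2),
      Fin.sum_univ_eq_sum_range (fun k => ((k:ℝ) + 1) ^ 2) n, sum_sq_formula]
  -- Step B : D ≤ the logistic sum
  have stepB : D ≤ ∑ p ∈ univ.filter (fun p : Fin n × Fin n => y p.1 < y p.2),
      (y p.2 - y p.1) * Real.logb 2 (1 + Real.exp (-σ * (s p.1 - s p.2))) := by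
    rw [hDdef]
    have hD2 : D = ∑ p ∈ univ.filter (fun p : Fin n × Fin n => y p.1 < y p.2),
        (if s p.1 < s p.2 then y p.2 - y p.1 else 0) := by
      rw [hDdef, ← Finset.sum_filter, Finset.filter_filter]
    rw [← hDdef, hD2]
    apply Finset.sum_le_sum
    intro p hp
    simp only [mem_filter, mem_univ, true_and] at hp
    have ht : (0:ℝ) ≤ y p.2 - y p.1 := by linarith
    by_cases hsp : s p.1 < s p.2
    · rw [if_pos hsp]
      have h2 : (2:ℝ) ≤ 1 + Real.exp (-σ * (s p.1 - s p.2)) := by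
        have : (0:ℝ) ≤ -σ * (s p.1 - s p.2) := by nlinarith
        have := Real.one_le_exp this
        linarith
      have hL : (1:ℝ) ≤ Real.logb 2 (1 + Real.exp (-σ * (s p.1 - s p.2))) := by
        calc (1:ℝ) = Real.logb 2 2 := (Real.logb_self_eq_one (by norm_num)).symm
        _ ≤ _ := Real.logb_le_logb_of_le (by norm_num) (by norm_num) h2
      nlinarith
    · rw [if_neg hsp]
      apply mul_nonneg ht
      apply Real.logb_nonneg (by norm_num)
      have := Real.exp_pos (-σ * (s p.1 - s p.2))
      linarith
  -- final assembly
  have key : 1 - 12 * ((∑ i, (1 + ((univ.filter fun j => j ≠ i ∧ s i < s j).card : ℝ)) * y i)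
            - n * (((n : ℝ) + 1) / 2) ^ 2) / K = 12 / K * D := by
    rw [stepA, hQ, hKdef]
    have hn2 : (n:ℝ) ^ 2 - 1 ≠ 0 := ne_of_gt (by nlinarith)
    have hn0 : (n:ℝ) ≠ 0 := ne_of_gt (by linarith)
    field_simp
    ring
  rw [key]
  apply mul_le_mul_of_nonneg_left stepB
  positivity
end
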